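/- Let D, t, u, v be positive integers such that D is not a perfect square and the continued fraction expansion of √D is [t; \overline{u, v, u, 2t}] (period length 4). Then u(uv + 2) divides 2vut + 2t + v and D = t² + (2vut + 2t + v)/(u(uv + 2)). -/

import Mathlib

/-- Iterated Gauss map: `gaussIter x n` is the `n`-th complete quotient of the
continued fraction expansion of `x`. -/
noncomputable def gaussIter (x : ℝ) : ℕ → ℝ
  | 0 => x
  | n + 1 => (gaussIter x n - ⌊gaussIter x n⌋)⁻¹

/-- `cfCoeff x n` is the `n`-th partial quotient of the continued fraction of `x`. -/
noncomputable def cfCoeff (x : ℝ) (n : ℕ) : ℤ := ⌊gaussIter x n⌋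

/-- `IsPeriodicCF x k a` says that the continued fraction expansion of `x` is
`[a 0; a 1, …, a k, a 1, …, a k, …]`, i.e. `x = [a 0; \overline{a 1, …, a k}]`,
where the partial quotients `a 1, …, a k` are positive and `a k = 2 * a 0`. -/
def IsPeriodicCF (x : ℝ) (k : ℕ) (a : ℕ → ℤ) : Prop :=
  0 < a 0 ∧ (∀ i : ℕ, 1 ≤ i → i ≤ k → 0 < a i) ∧ a k = 2 * a 0 ∧
    cfCoeff x 0 = a 0 ∧ ∀ n : ℕ, 1 ≤ n → cfCoeff x n = a ((n - 1) % k + 1)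

lemma gaussIter_irrational {x : ℝ} (hx : Irrational x) : ∀ n, Irrational (gaussIter x n)
  | 0 => hx
  | n + 1 => ((gaussIter_irrational hx n).sub_intCast _).inv

lemma gaussIter_fract_pos {x : ℝ} (hx : Irrational x) (n : ℕ) :
    0 < gaussIter x n - ⌊gaussIter x n⌋ := by
  have h1 : (⌊gaussIter x n⌋ : ℝ) ≤ gaussIter x n := Int.floor_le _
  have h2 : gaussIter x n ≠ (⌊gaussIter x n⌋ : ℝ) := (gaussIter_irrational hx n).ne_int _
  cases h1.lt_or_eq with
  | inl h => linarith
  | inr h => exact absurd h.symm h2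

lemma gaussIter_succ_eq (x : ℝ) (n : ℕ) :
    gaussIter x (n + 1) = (gaussIter x n - ⌊gaussIter x n⌋)⁻¹ := rfl

lemma gaussIter_succ_gt_one {x : ℝ} (hx : Irrational x) (n : ℕ) :
    1 < gaussIter x (n + 1) := by
  have hp := gaussIter_fract_pos hx n
  have hl : gaussIter x n - ⌊gaussIter x n⌋ < 1 := by
    have := Int.lt_floor_add_one (gaussIter x n); linarith
  rw [gaussIter_succ_eq]
  exact one_lt_inv_iff₀.2 ⟨hp, hl⟩

lemma gaussIter_rec {x : ℝ} (hx : Irrational x) (n : ℕ) :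
    gaussIter x n = (⌊gaussIter x n⌋ : ℝ) + (gaussIter x (n + 1))⁻¹ := by
  have hp := gaussIter_fract_pos hx n
  rw [gaussIter_succ_eq, inv_inv]; ring

set_option maxHeartbeats 1000000 in
/-- If `√D = [t; \overline{u, v, u, 2t}]` (period length 4), then
`u(uv + 2) ∣ 2vut + 2t + v` and `D = t² + (2vut + 2t + v)/(u(uv + 2))`. -/
theorem sqrt_cf_period_four_eq (D t u v : ℕ) (hD : 0 < D) (ht : 0 < t)
    (hu : 0 < u) (hv : 0 < v) (hsq : ¬ IsSquare D)
    (h : IsPeriodicCF (Real.sqrt D) 4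
      (fun n => if n = 0 then (t : ℤ) else if n = 1 then u else if n = 2 then v
        else if n = 3 then u else 2 * t)) :
    u * (u * v + 2) ∣ 2 * v * u * t + 2 * t + v ∧
      D = t ^ 2 + (2 * v * u * t + 2 * t + v) / (u * (u * v + 2)) := by
  obtain ⟨-, hapos, -, hc0, hcn⟩ := h
  set x : ℝ := Real.sqrt D with hxdef
  have hirr : Irrational x := irrational_sqrt_natCast_iff.mpr hsq
  set ξ : ℕ → ℝ := gaussIter x with hξ
  have hgir := gaussIter_irrational hirr
  have hrec : ∀ n, ξ n = (⌊ξ n⌋ : ℝ) + (ξ (n + 1))⁻¹ := fun n => gaussIter_rec hirr n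
  have hgt1 : ∀ n, 1 < ξ (n + 1) := fun n => gaussIter_succ_gt_one hirr n
  -- floor values
  have hfl0 : ⌊x⌋ = (t : ℤ) := by simpa [cfCoeff, gaussIter] using hc0
  have hflv : ∀ n : ℕ, 1 ≤ n → ⌊ξ n⌋ =
      (fun j : ℕ => if j = 0 then (t : ℤ) else if j = 1 then (u : ℤ) else if j = 2 then (v : ℤ)
        else if j = 3 then (u : ℤ) else 2 * t) ((n - 1) % 4 + 1) := fun n hn => hcn n hn
  have hfl_per : ∀ n : ℕ, 1 ≤ n → ⌊ξ (n + 4)⌋ = ⌊ξ n⌋ := by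
    intro n hn
    rw [hflv n hn, hflv (n + 4) (by omega)]
    have : (n + 4 - 1) % 4 + 1 = (n - 1) % 4 + 1 := by omega
    rw [this]
  have hfl_pos : ∀ n : ℕ, 1 ≤ n → 1 ≤ ⌊ξ n⌋ := by
    intro n hn
    rw [hflv n hn]
    exact hapos _ (by omega) (by omega)
  have hfl_bd : ∀ n : ℕ, 1 ≤ n → ⌊ξ n⌋ ≤ 2 * t + u + v := by
    intro n hn
    rw [hflv n hn]
    simp only
    split_ifs <;> omega
  have hfl_four : ∀ k : ℕ, ⌊ξ (4 * k + 4)⌋ = 2 * t := by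
    intro k
    rw [hflv (4 * k + 4) (by omega)]
    have : (4 * k + 4 - 1) % 4 + 1 = 4 := by omega
    rw [this]
    norm_num
  -- bounds on ξ n for n ≥ 1
  have hxi_lb : ∀ n : ℕ, 1 ≤ n → 1 ≤ ξ n := by
    intro n hn
    have h1 : (⌊ξ n⌋ : ℝ) ≤ ξ n := Int.floor_le _
    have h2 : (1 : ℝ) ≤ (⌊ξ n⌋ : ℝ) := by exact_mod_cast hfl_pos n hn
    linarith
  have hxi_ub : ∀ n : ℕ, 1 ≤ n → ξ n ≤ 2 * (t : ℝ) + u + v + 1 := by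
    intro n hn
    have h1 : ξ n < (⌊ξ n⌋ : ℝ) + 1 := Int.lt_floor_add_one _
    have h2 : (⌊ξ n⌋ : ℝ) ≤ 2 * (t : ℝ) + u + v := by
      have := hfl_bd n hn; push_cast; exact_mod_cast this
    linarith
  have hxi_four : ∀ k : ℕ, 2 ≤ ξ (4 * k + 4) := by
    intro k
    have h1 : (⌊ξ (4 * k + 4)⌋ : ℝ) ≤ ξ (4 * k + 4) := Int.floor_le _
    have h2 : (⌊ξ (4 * k + 4)⌋ : ℝ) = 2 * t := by rw [hfl_four k]; push_cast; ring
    have : (1 : ℝ) ≤ t := by exact_mod_cast ht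
    linarith
  -- key difference formula
  have hne : ∀ n : ℕ, 1 ≤ n → ξ n ≠ 0 := fun n hn => by
    have := hxi_lb n hn; linarith
  have keydiff : ∀ n : ℕ, 1 ≤ n →
      ξ n - ξ (n + 4) = (ξ (n + 5) - ξ (n + 1)) / (ξ (n + 1) * ξ (n + 5)) := by
    intro n hn
    have h1 := hrec n
    have h2 := hrec (n + 4)
    have hfl : ⌊ξ (n + 4)⌋ = ⌊ξ n⌋ := hfl_per n hn
    have hne1 := hne (n + 1) (by omega)
    have hne5 := hne (n + 5) (by omega)
    have h45 : ξ (n + 4 + 1) = ξ (n + 5) := by norm_num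
    rw [h1, h2, hfl, h45]
    field_simp
    ring
  have habs : ∀ n : ℕ, 1 ≤ n →
      |ξ n - ξ (n + 4)| = |ξ (n + 1) - ξ (n + 5)| / (ξ (n + 1) * ξ (n + 5)) := by
    intro n hn
    have hp : 0 < ξ (n + 1) * ξ (n + 5) := by
      have := hxi_lb (n + 1) (by omega); have := hxi_lb (n + 5) (by omega); nlinarith
    rw [keydiff n hn, abs_div, abs_of_pos hp, abs_sub_comm]
  have step_le : ∀ n : ℕ, 1 ≤ n → |ξ n - ξ (n + 4)| ≤ |ξ (n + 1) - ξ (n + 5)| := by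
    intro n hn
    rw [habs n hn]
    have h1 := hxi_lb (n + 1) (by omega)
    have h5 := hxi_lb (n + 5) (by omega)
    exact div_le_self (abs_nonneg _) (by nlinarith)
  have step_quarter : ∀ k : ℕ,
      |ξ (4 * k + 3) - ξ (4 * k + 7)| ≤ (1 / 4) * |ξ (4 * k + 4) - ξ (4 * k + 8)| := by
    intro k
    have e1 : (4 : ℕ) * k + 3 + 1 = 4 * k + 4 := by ring
    have e2 : (4 : ℕ) * k + 3 + 5 = 4 * k + 8 := by ring
    have := habs (4 * k + 3) (by omega)
    rw [e1, e2] at this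
    rw [this]
    have h4 := hxi_four k
    have h8 : 2 ≤ ξ (4 * k + 8) := by
      have := hxi_four (k + 1)
      have e : 4 * (k + 1) + 4 = 4 * k + 8 := by ring
      rwa [e] at this
    have hd : (4 : ℝ) ≤ ξ (4 * k + 4) * ξ (4 * k + 8) := by nlinarith
    calc |ξ (4 * k + 4) - ξ (4 * k + 8)| / (ξ (4 * k + 4) * ξ (4 * k + 8))
        ≤ |ξ (4 * k + 4) - ξ (4 * k + 8)| / 4 :=
          div_le_div_of_nonneg_left (abs_nonneg _) (by norm_num) hd
      _ = (1 / 4) * |ξ (4 * k + 4) - ξ (4 * k + 8)| := by ring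
  have main : ∀ k : ℕ, |ξ 1 - ξ 5| ≤ (1 / 4 : ℝ) ^ k * |ξ (4 * k + 1) - ξ (4 * k + 5)| := by
    intro k
    induction k with
    | zero => norm_num
    | succ k ih =>
      have c1 : |ξ (4 * k + 1) - ξ (4 * k + 5)| ≤ (1 / 4) * |ξ (4 * k + 5) - ξ (4 * k + 9)| := by
        calc |ξ (4 * k + 1) - ξ (4 * k + 5)| ≤ |ξ (4 * k + 1 + 1) - ξ (4 * k + 1 + 5)| :=
              step_le _ (by omega)
          _ = |ξ (4 * k + 2) - ξ (4 * k + 6)| := by norm_num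
          _ ≤ |ξ (4 * k + 2 + 1) - ξ (4 * k + 2 + 5)| := step_le _ (by omega)
          _ = |ξ (4 * k + 3) - ξ (4 * k + 7)| := by norm_num
          _ ≤ (1 / 4) * |ξ (4 * k + 4) - ξ (4 * k + 8)| := step_quarter k
          _ ≤ (1 / 4) * |ξ (4 * k + 4 + 1) - ξ (4 * k + 4 + 5)| := by
              have := step_le (4 * k + 4) (by omega)
              nlinarith [abs_nonneg (ξ (4 * k + 4) - ξ (4 * k + 4 + 4))]
          _ = (1 / 4) * |ξ (4 * k + 5) - ξ (4 * k + 9)| := by norm_num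
      have e1 : 4 * (k + 1) + 1 = 4 * k + 5 := by ring
      have e2 : 4 * (k + 1) + 5 = 4 * k + 9 := by ring
      rw [e1, e2]
      calc |ξ 1 - ξ 5| ≤ (1 / 4 : ℝ) ^ k * |ξ (4 * k + 1) - ξ (4 * k + 5)| := ih
        _ ≤ (1 / 4 : ℝ) ^ k * ((1 / 4) * |ξ (4 * k + 5) - ξ (4 * k + 9)|) := by
            have hp : (0 : ℝ) ≤ (1 / 4 : ℝ) ^ k := by positivity
            nlinarith [abs_nonneg (ξ (4 * k + 1) - ξ (4 * k + 5))]
        _ = (1 / 4 : ℝ) ^ (k + 1) * |ξ (4 * k + 5) - ξ (4 * k + 9)| := by ring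
  -- conclude ξ 5 = ξ 1
  set B : ℝ := 2 * (t : ℝ) + u + v + 1 with hB
  have hBpos : 0 < B := by
    have h1t : (1 : ℝ) ≤ t := by exact_mod_cast ht
    rw [hB]; positivity
  have hbound : ∀ k : ℕ, |ξ (4 * k + 1) - ξ (4 * k + 5)| ≤ B := by
    intro k
    have l1 := hxi_lb (4 * k + 1) (by omega)
    have l5 := hxi_lb (4 * k + 5) (by omega)
    have u1 := hxi_ub (4 * k + 1) (by omega)
    have u5 := hxi_ub (4 * k + 5) (by omega)
    exact abs_le.2 ⟨by linarith, by linarith⟩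
  have heq15 : ξ 5 = ξ 1 := by
    by_contra hne15
    have hd : 0 < |ξ 1 - ξ 5| := by
      rw [abs_pos, sub_ne_zero]; exact fun hh => hne15 hh.symm
    obtain ⟨k, hk⟩ := exists_pow_lt_of_lt_one (div_pos hd hBpos) (by norm_num : (1 / 4 : ℝ) < 1)
    have h1 : |ξ 1 - ξ 5| ≤ (1 / 4 : ℝ) ^ k * B := by
      calc |ξ 1 - ξ 5| ≤ (1 / 4 : ℝ) ^ k * |ξ (4 * k + 1) - ξ (4 * k + 5)| := main k
        _ ≤ (1 / 4 : ℝ) ^ k * B := by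
            have : (0 : ℝ) ≤ (1 / 4 : ℝ) ^ k := by positivity
            nlinarith [hbound k]
    have h2 : (1 / 4 : ℝ) ^ k * B < |ξ 1 - ξ 5| := (lt_div_iff₀ hBpos).mp hk
    linarith
  -- algebra
  have hs : x * x = (D : ℝ) := Real.mul_self_sqrt (by positivity)
  have hflx : (⌊x⌋ : ℝ) = (t : ℝ) := by rw [hfl0]; push_cast; ring
  have e0 : x = (t : ℝ) + (ξ 1)⁻¹ := by
    have := hrec 0
    simpa [show ξ 0 = x from rfl, hflx] using this
  have hξ1pos : 0 < ξ 1 := by have := hgt1 0; norm_num at this; linarith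
  have hinv1 : (ξ 1)⁻¹ = x - t := by linarith [e0]
  have hxt : (0 : ℝ) < x - t := by rw [← hinv1]; positivity
  have fl1 : (⌊ξ 1⌋ : ℝ) = (u : ℝ) := by
    have := hflv 1 (by omega); norm_num at this; rw [this]; norm_num
  have fl2 : (⌊ξ 2⌋ : ℝ) = (v : ℝ) := by
    have := hflv 2 (by omega); norm_num at this; rw [this]; norm_num
  have fl3 : (⌊ξ 3⌋ : ℝ) = (u : ℝ) := by
    have := hflv 3 (by omega); norm_num at this; rw [this]; norm_num
  have fl4 : (⌊ξ 4⌋ : ℝ) = 2 * (t : ℝ) := by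
    have := hflv 4 (by omega); norm_num at this; rw [this]; push_cast; ring
  have e1 : ξ 1 = (u : ℝ) + (ξ 2)⁻¹ := by have := hrec 1; rwa [fl1] at this
  have e2 : ξ 2 = (v : ℝ) + (ξ 3)⁻¹ := by have := hrec 2; rwa [fl2] at this
  have e3 : ξ 3 = (u : ℝ) + (ξ 4)⁻¹ := by have := hrec 3; rwa [fl3] at this
  have e4 : ξ 4 = (t : ℝ) + x := by
    have := hrec 4
    rw [fl4] at this
    have h5 : ξ (4 + 1) = ξ 1 := by norm_num [heq15]
    rw [h5, hinv1] at this
    rw [this]; ring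
  have hξ2pos : 0 < ξ 2 := by have := hgt1 1; norm_num at this; linarith
  have hξ3pos : 0 < ξ 3 := by have := hgt1 2; norm_num at this; linarith
  have htxpos : (0 : ℝ) < (t : ℝ) + x := by
    have : (1 : ℝ) ≤ t := by exact_mod_cast ht
    nlinarith [hxt]
  have E3 : ξ 3 * ((t : ℝ) + x) = u * ((t : ℝ) + x) + 1 := by
    rw [e3, e4]; field_simp
  have E2 : ξ 2 * ξ 3 = v * ξ 3 + 1 := by
    rw [e2]; field_simp
  have E1 : (u * ξ 2 + 1) * (x - t) = ξ 2 := by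
    have h1 : ξ 1 * (x - t) = 1 := by
      rw [← hinv1]; exact mul_inv_cancel₀ (ne_of_gt hξ1pos)
    rw [e1] at h1
    field_simp at h1
    linear_combination h1
  have E12 : (x - t) * (u * v * ξ 3 + u + ξ 3) = v * ξ 3 + 1 := by
    linear_combination ξ 3 * E1 + (1 - u * (x - t)) * E2
  have E4 : (x - t) * (u * v * (u * ((t : ℝ) + x) + 1) + u * ((t : ℝ) + x)
      + (u * ((t : ℝ) + x) + 1)) = v * (u * ((t : ℝ) + x) + 1) + ((t : ℝ) + x) := by
    linear_combination ((t : ℝ) + x) * E12 - ((x - t) * (u * v + 1) - v) * E3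
  have G : ((D : ℝ) - (t : ℝ) ^ 2) * (u * (u * v + 2)) = 2 * v * u * t + 2 * t + v := by
    linear_combination E4 - ((u : ℝ) ^ 2 * v + 2 * u) * hs
  -- translate to ℕ
  have hkpos : 0 < u * (u * v + 2) := Nat.mul_pos hu (by omega)
  have hmpos : 0 < 2 * v * u * t + 2 * t + v :=
    Nat.lt_of_lt_of_le hv (Nat.le_add_left v _)
  have ht2 : t ^ 2 < D := by
    by_contra hcon
    push_neg at hcon
    have h1 : (D : ℝ) - (t : ℝ) ^ 2 ≤ 0 := by
      have : (D : ℝ) ≤ (t : ℝ) ^ 2 := by exact_mod_cast hcon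
      linarith
    have h2 : (0 : ℝ) < (u : ℝ) * (u * v + 2) := by positivity
    have h3 : (0 : ℝ) < 2 * (v : ℝ) * u * t + 2 * t + v := by positivity
    nlinarith [G]
  have hnat : (D - t ^ 2) * (u * (u * v + 2)) = 2 * v * u * t + 2 * t + v := by
    have hle : t ^ 2 ≤ D := le_of_lt ht2
    have hre : (((D - t ^ 2) * (u * (u * v + 2)) : ℕ) : ℝ)
        = ((2 * v * u * t + 2 * t + v : ℕ) : ℝ) := by
      push_cast [hle]
      linear_combination G
    exact_mod_cast hre
  constructor
  · exact ⟨D - t ^ 2, by rw [← hnat]; ring⟩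
  · have : (2 * v * u * t + 2 * t + v) / (u * (u * v + 2)) = D - t ^ 2 := by
      rw [← hnat]
      exact Nat.mul_div_cancel _ hkpos
    rw [this]
    omega
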